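/- arXiv:2203.13756 — 3 statements merged into one kernel-verified Lean document; each statement's English description precedes it below -/
import Mathlib

section
/- Let d ≥ 1, n ≥ 0, and let ω_N ⊂ S^d be a spherical 2n-design. Then for every point z ∈ S^d, the set D(z, ω_N) = {z·x : x ∈ ω_N} of dot products contains at least n+1 distinct elements. -/
open scoped RealInnerProductSpace
open MeasureTheory Set

noncomputable section

/-- Euclidean space `ℝ^{d+1}` containing the sphere `S^d`. -/
abbrev E (d : ℕ) := EuclideanSpace ℝ (Fin (d+1))

/-- The unit sphere `S^d ⊂ ℝ^{d+1}`. -/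
def sph (d : ℕ) : Set (E d) := Metric.sphere 0 1

/-- Normalized surface (Hausdorff) measure `σ_d` on `S^d`. -/
def sigmad (d : ℕ) : Measure (E d) :=
  (μH[(d:ℝ)] (sph d))⁻¹ • (μH[(d:ℝ)]).restrict (sph d)

/-- `ω = (x i)` is a spherical `n`-design: averages of polynomials of degree
at most `n` over the configuration coincide with their `σ_d`-averages. -/
def IsDesign (d n : ℕ) {ι : Type} [Fintype ι] (x : ι → E d) : Prop :=
  ∀ p : MvPolynomial (Fin (d+1)) ℝ, p.totalDegree ≤ n →
    (Fintype.card ι : ℝ)⁻¹ * ∑ i, MvPolynomial.eval (fun j => x i j) p =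
      ∫ y, MvPolynomial.eval (fun j => y j) p ∂(sigmad d)

/-- The set of dot products between distinct points of the configuration. -/
def dotSet {d : ℕ} {ι : Type} (x : ι → E d) : Set ℝ :=
  {t | ∃ i j, i ≠ j ∧ (inner ℝ (x i) (x j) : ℝ) = t}

/-- An `m`-sharp configuration on `S^d`: a spherical `(2m-1)`-design whose
distinct points realize exactly `m` distinct dot products. -/
def IsSharp (d m : ℕ) {ι : Type} [Fintype ι] (x : ι → E d) : Prop :=
  (∀ i, x i ∈ sph d) ∧ Function.Injective x ∧
    IsDesign d (2*m-1) x ∧ (dotSet x).ncard = m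

/-- A strongly `m`-sharp configuration: an `m`-sharp configuration which is
moreover a spherical `2m`-design. -/
def IsStronglySharp (d m : ℕ) {ι : Type} [Fintype ι] (x : ι → E d) : Prop :=
  IsSharp d m x ∧ IsDesign d (2*m) x

/-- An antipodal (centrally symmetric) configuration. -/
def IsAntipodal {d : ℕ} {ι : Type} (x : ι → E d) : Prop :=
  ∀ i, ∃ j, x j = -x i



lemma euc_lip_symm (m : ℕ) :
    LipschitzWith ((m : NNReal) ^ ((1:ℝ)/2)) (⇑(WithLp.equiv 2 (Fin m → ℝ)).symm) := by
  intro a b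
  have h := PiLp.antilipschitzWith_ofLp 2 (fun _ : Fin m => ℝ)
    ((WithLp.equiv 2 _).symm a) ((WithLp.equiv 2 _).symm b)
  simpa [Fintype.card_fin] using h

lemma euc_vol_eq_image (m : ℕ) (s : Set (EuclideanSpace ℝ (Fin m))) (hs : MeasurableSet s) :
    volume ((WithLp.equiv 2 (Fin m → ℝ)) '' s) = volume s := by
  have h1 : (WithLp.equiv 2 (Fin m → ℝ)) '' s
      = ⇑(MeasurableEquiv.toLp 2 (Fin m → ℝ)) ⁻¹' s := by
    rw [MeasurableEquiv.coe_toLp]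
    exact ((WithLp.equiv 2 (Fin m → ℝ))).image_eq_preimage_symm s
  rw [h1]
  exact ((EuclideanSpace.volume_preserving_symm_measurableEquiv_toLp (Fin m)).symm _).measure_preimage
    hs.nullMeasurableSet

lemma euc_volume_le_hausdorff (m : ℕ) (s : Set (EuclideanSpace ℝ (Fin m)))
    (hs : MeasurableSet s) : volume s ≤ μH[(m:ℝ)] s := by
  have h := (PiLp.lipschitzWith_ofLp 2 (fun _ : Fin m => ℝ) : LipschitzWith 1 (WithLp.equiv 2 (Fin m → ℝ))).hausdorffMeasure_image_le
    (d := (m:ℝ)) (Nat.cast_nonneg m) s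
  rw [show (μH[(m:ℝ)] : Measure (Fin m → ℝ)) = volume by
      simpa [Fintype.card_fin] using (hausdorffMeasure_pi_real (ι := Fin m)),
    show volume (WithLp.ofLp '' s) = volume s from euc_vol_eq_image m s hs] at h
  simpa using h

lemma euc_hausdorff_le_volume (m : ℕ) (s : Set (EuclideanSpace ℝ (Fin m)))
    (hs : MeasurableSet s) :
    μH[(m:ℝ)] s ≤ (((m : NNReal) ^ ((1:ℝ)/2) : NNReal) : ENNReal) ^ (m:ℝ) * volume s := by
  have h := (euc_lip_symm m).hausdorffMeasure_image_le (d := (m:ℝ)) (Nat.cast_nonneg m)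
    ((WithLp.equiv 2 (Fin m → ℝ)) '' s)
  have himg : (WithLp.equiv 2 (Fin m → ℝ)).symm '' ((WithLp.equiv 2 (Fin m → ℝ)) '' s) = s := by
    simp [Set.image_image]
  rw [himg] at h
  calc μH[(m:ℝ)] s ≤ (((m : NNReal) ^ ((1:ℝ)/2) : NNReal) : ENNReal) ^ (m:ℝ)
        * μH[(m:ℝ)] ((WithLp.equiv 2 (Fin m → ℝ)) '' s) := h
    _ = _ := by
        rw [show (μH[(m:ℝ)] : Measure (Fin m → ℝ)) = volume by
          simpa [Fintype.card_fin] using (hausdorffMeasure_pi_real (ι := Fin m)),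
          euc_vol_eq_image m s hs]

lemma coord_le_norm {m : ℕ} (x : EuclideanSpace ℝ (Fin m)) (i : Fin m) : |x i| ≤ ‖x‖ := by
  rw [EuclideanSpace.norm_eq, ← Real.sqrt_sq_eq_abs]
  apply Real.sqrt_le_sqrt
  simp only [Real.norm_eq_abs, sq_abs]
  exact Finset.single_le_sum (f := fun j => x j ^ 2) (fun j _ => sq_nonneg _) (Finset.mem_univ i)

lemma norm_sq_eq {m : ℕ} (x : EuclideanSpace ℝ (Fin m)) : ‖x‖ ^ 2 = ∑ j, x j ^ 2 := by
  rw [EuclideanSpace.norm_eq, Real.sq_sqrt (Finset.sum_nonneg fun k _ => sq_nonneg _)]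
  simp [sq_abs]

/-- cons as a map to `E d` -/
def consE {d : ℕ} (c : ℝ) (u : EuclideanSpace ℝ (Fin d)) : E d :=
  (WithLp.equiv 2 _).symm (Fin.cons c (WithLp.equiv 2 _ u))

lemma consE_zero {d : ℕ} (c : ℝ) (u : EuclideanSpace ℝ (Fin d)) : consE c u 0 = c := rfl
lemma consE_succ {d : ℕ} (c : ℝ) (u : EuclideanSpace ℝ (Fin d)) (k : Fin d) :
    consE c u k.succ = u k := by simp [consE]

/-- insertNth as a map to `E d` -/
def insE {d : ℕ} (i : Fin (d+1)) (ε : ℝ) (u : EuclideanSpace ℝ (Fin d)) : E d :=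
  (WithLp.equiv 2 _).symm (Fin.insertNth i ε (WithLp.equiv 2 _ u))

lemma insE_same {d : ℕ} (i : Fin (d+1)) (ε : ℝ) (u : EuclideanSpace ℝ (Fin d)) :
    insE i ε u i = ε := by simp [insE]
lemma insE_succAbove {d : ℕ} (i : Fin (d+1)) (ε : ℝ) (u : EuclideanSpace ℝ (Fin d)) (k : Fin d) :
    insE i ε u (i.succAbove k) = u k := by simp [insE]

lemma insE_isometry {d : ℕ} (i : Fin (d+1)) (ε : ℝ) : Isometry (insE i ε) := by
  apply Isometry.of_dist_eq
  intro u v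
  rw [EuclideanSpace.dist_eq, EuclideanSpace.dist_eq]
  congr 1
  rw [Fin.sum_univ_succAbove (fun j => dist (insE i ε u j) (insE i ε v j) ^ 2) i]
  simp [insE_same, insE_succAbove]

lemma proj_lipschitz (d : ℕ) :
    LipschitzWith 1 (fun (y : E d) =>
      ((WithLp.equiv 2 _).symm (fun k : Fin d => y k.succ) : EuclideanSpace ℝ (Fin d))) := by
  apply LipschitzWith.of_dist_le_mul
  intro y y'
  rw [NNReal.coe_one, one_mul, EuclideanSpace.dist_eq, EuclideanSpace.dist_eq]
  apply Real.sqrt_le_sqrt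
  rw [Fin.sum_univ_succ (f := fun j => dist (y j) (y' j) ^ 2)]
  have h0 : (0:ℝ) ≤ dist (y 0) (y' 0) ^ 2 := sq_nonneg _
  simp only [WithLp.equiv_symm_apply, PiLp.toLp_apply]
  linarith [le_refl (∑ k : Fin d, dist (y k.succ) (y' k.succ) ^ 2)]

lemma sph_haus_pos (d : ℕ) (hd : 1 ≤ d) : 0 < μH[(d:ℝ)] (sph d) := by
  set p : E d → EuclideanSpace ℝ (Fin d) :=
    fun y => (WithLp.equiv 2 _).symm (fun k : Fin d => y k.succ) with hp
  have hcov : Metric.closedBall (0 : EuclideanSpace ℝ (Fin d)) 1 ⊆ p '' (sph d) := by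
    intro u hu
    rw [Metric.mem_closedBall, dist_zero_right] at hu
    have h1 : (0:ℝ) ≤ 1 - ‖u‖^2 := by nlinarith [norm_nonneg u]
    refine ⟨consE (Real.sqrt (1 - ‖u‖^2)) u, ?_, ?_⟩
    · have hn : ‖consE (Real.sqrt (1 - ‖u‖^2)) u‖ = 1 := by
        have h2 : ‖consE (Real.sqrt (1 - ‖u‖^2)) u‖ ^ 2 = 1 := by
          rw [norm_sq_eq]
          rw [Fin.sum_univ_succ (f := fun j => consE (Real.sqrt (1 - ‖u‖^2)) u j ^ 2)]
          simp only [consE_zero, consE_succ]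
          rw [Real.sq_sqrt h1, ← norm_sq_eq]
          ring
        nlinarith [norm_nonneg (consE (Real.sqrt (1 - ‖u‖^2)) u)]
      simpa [sph] using hn
    · rw [hp, Equiv.symm_apply_eq]
      funext k
      simp [consE_succ]
  have h1 : volume (Metric.closedBall (0 : EuclideanSpace ℝ (Fin d)) 1) ≤ μH[(d:ℝ)] (sph d) := by
    calc volume (Metric.closedBall (0 : EuclideanSpace ℝ (Fin d)) 1)
        ≤ μH[(d:ℝ)] (Metric.closedBall (0 : EuclideanSpace ℝ (Fin d)) 1) :=
          euc_volume_le_hausdorff d _ Metric.isClosed_closedBall.measurableSet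
      _ ≤ μH[(d:ℝ)] (p '' (sph d)) := measure_mono hcov
      _ ≤ 1 ^ (d:ℝ) * μH[(d:ℝ)] (sph d) :=
          (proj_lipschitz d).hausdorffMeasure_image_le (Nat.cast_nonneg d) _
      _ = μH[(d:ℝ)] (sph d) := by simp
  exact lt_of_lt_of_le (Metric.measure_closedBall_pos volume 0 one_pos) h1

lemma normalize_lip (d : ℕ) :
    LipschitzOnWith 2 (fun x : E d => ‖x‖⁻¹ • x) {x : E d | 1 ≤ ‖x‖} := by
  have key : ∀ x y : E d, 1 ≤ ‖x‖ → 1 ≤ ‖y‖ → ‖y‖ ≤ ‖x‖ →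
      dist (‖x‖⁻¹ • x) (‖y‖⁻¹ • y) ≤ 2 * dist x y := by
    intro x y hx hy hyx
    have hx0 : (0:ℝ) < ‖x‖ := lt_of_lt_of_le one_pos hx
    have hy0 : (0:ℝ) < ‖y‖ := lt_of_lt_of_le one_pos hy
    rw [dist_eq_norm]
    have hsplit : ‖x‖⁻¹ • x - ‖y‖⁻¹ • y = ‖x‖⁻¹ • (x - y) + (‖x‖⁻¹ - ‖y‖⁻¹) • y := by
      rw [smul_sub, sub_smul]; abel
    rw [hsplit]
    have h1 : ‖‖x‖⁻¹ • (x - y)‖ ≤ ‖x - y‖ := by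
      rw [norm_smul, Real.norm_eq_abs, abs_of_pos (inv_pos.mpr hx0)]
      calc ‖x‖⁻¹ * ‖x - y‖ ≤ 1 * ‖x - y‖ := by
            apply mul_le_mul_of_nonneg_right _ (norm_nonneg _)
            rw [inv_le_one_iff₀]; right; exact hx
        _ = ‖x - y‖ := one_mul _
    have h2 : ‖(‖x‖⁻¹ - ‖y‖⁻¹) • y‖ ≤ ‖x - y‖ := by
      rw [norm_smul, Real.norm_eq_abs]
      have heq : |‖x‖⁻¹ - ‖y‖⁻¹| = (‖x‖ - ‖y‖) / (‖x‖ * ‖y‖) := by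
        rw [abs_of_nonpos (by
          have := one_div_le_one_div_of_le hy0 hyx
          simp only [one_div] at this
          linarith)]
        field_simp
        ring
      rw [heq]
      have hxy : ‖x‖ - ‖y‖ ≤ ‖x - y‖ := by
        have := norm_sub_norm_le x y
        linarith [abs_le.mp (abs_norm_sub_norm_le x y)]
      calc (‖x‖ - ‖y‖) / (‖x‖ * ‖y‖) * ‖y‖ = (‖x‖ - ‖y‖) / ‖x‖ := by field_simp
        _ ≤ ‖x - y‖ / 1 := div_le_div₀ (norm_nonneg _) hxy one_pos hx
        _ = ‖x - y‖ := div_one _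
    calc ‖‖x‖⁻¹ • (x - y) + (‖x‖⁻¹ - ‖y‖⁻¹) • y‖
        ≤ ‖‖x‖⁻¹ • (x - y)‖ + ‖(‖x‖⁻¹ - ‖y‖⁻¹) • y‖ := norm_add_le _ _
      _ ≤ ‖x - y‖ + ‖x - y‖ := add_le_add h1 h2
      _ = 2 * dist x y := by rw [dist_eq_norm]; ring
  apply LipschitzOnWith.of_dist_le_mul
  intro x hx y hy
  rcases le_total ‖y‖ ‖x‖ with h | h
  · simpa using key x y hx hy h
  · rw [dist_comm, dist_comm x y]
    simpa using key y x hy hx h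

lemma sph_haus_fin (d : ℕ) : μH[(d:ℝ)] (sph d) < ⊤ := by
  classical
  set B : Set (EuclideanSpace ℝ (Fin d)) := Metric.closedBall 0 (Real.sqrt d) with hB
  set C : Set (E d) := (⋃ i : Fin (d+1), (insE i 1 '' B ∪ insE i (-1) '' B)) ∩ {x : E d | 1 ≤ ‖x‖}
    with hC
  have hcov : sph d ⊆ (fun x : E d => ‖x‖⁻¹ • x) '' C := by
    intro x hxs
    have hx1 : ‖x‖ = 1 := by simpa [sph] using hxs
    obtain ⟨i, -, hi⟩ := Finset.exists_max_image Finset.univ (fun j => |x j|) ⟨0, Finset.mem_univ 0⟩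
    have him : ∀ j, |x j| ≤ |x i| := fun j => hi j (Finset.mem_univ j)
    have hm0 : 0 < |x i| := by
      by_contra h
      push_neg at h
      have hx0' : x = 0 := by
        ext j
        simpa using abs_nonpos_iff.mp (le_trans (him j) h)
      rw [hx0'] at hx1; simp at hx1
    set m := |x i| with hmm
    set y : E d := m⁻¹ • x with hy
    have hyj : ∀ j, |y j| ≤ 1 := by
      intro j
      have hyjj : y j = m⁻¹ * x j := rfl
      have h2 : m⁻¹ * |x j| ≤ m⁻¹ * m := mul_le_mul_of_nonneg_left (him j) (inv_pos.mpr hm0).le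
      rw [inv_mul_cancel₀ hm0.ne'] at h2
      rw [hyjj, abs_mul, abs_of_pos (inv_pos.mpr hm0)]
      exact h2
    have hyi : |y i| = 1 := by
      have : y i = m⁻¹ * x i := rfl
      rw [this, abs_mul, abs_of_pos (inv_pos.mpr hm0), ← hmm, inv_mul_cancel₀ hm0.ne']
    have hyn : ‖y‖ = m⁻¹ := by
      rw [hy, norm_smul, Real.norm_eq_abs, abs_of_pos (inv_pos.mpr hm0), hx1, mul_one]
    have hm1 : m ≤ 1 := by
      have := coord_le_norm x i
      rw [hx1] at this; exact this
    have hyge : 1 ≤ ‖y‖ := by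
      rw [hyn]
      exact (one_le_inv₀ hm0).mpr hm1
    refine ⟨y, ⟨?_, hyge⟩, ?_⟩
    · apply Set.mem_iUnion.mpr ⟨i, ?_⟩
      have hcases : y i = 1 ∨ y i = -1 := by
        rcases abs_eq (by norm_num : (0:ℝ) ≤ 1) |>.mp hyi with h | h
        · exact Or.inl h
        · exact Or.inr h
      have hmem : ∀ ε : ℝ, y i = ε → y ∈ insE i ε '' B := by
        intro ε hε
        refine ⟨(WithLp.equiv 2 _).symm (fun k => y (i.succAbove k)), ?_, ?_⟩
        · rw [hB, Metric.mem_closedBall, dist_zero_right]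
          rw [← Real.sqrt_sq (norm_nonneg _), norm_sq_eq]
          apply Real.sqrt_le_sqrt
          calc ∑ k : Fin d, ((WithLp.equiv 2 _).symm (fun k => y (i.succAbove k))
                : EuclideanSpace ℝ (Fin d)) k ^ 2
              = ∑ k : Fin d, y (i.succAbove k) ^ 2 := by
                apply Finset.sum_congr rfl; intro k _; rfl
            _ ≤ ∑ _k : Fin d, (1:ℝ) := by
                apply Finset.sum_le_sum
                intro k _
                have h4 := abs_le.mp (hyj (i.succAbove k))
                nlinarith [h4.1, h4.2]
            _ = (d:ℝ) := by simp
        · rw [insE, Equiv.symm_apply_eq]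
          have h5 : (WithLp.equiv 2 (Fin d → ℝ))
              ((WithLp.equiv 2 (Fin d → ℝ)).symm (fun k => y (i.succAbove k)))
              = (fun k => y (i.succAbove k)) := Equiv.apply_symm_apply _ _
          rw [h5, ← hε]
          have h6 : (i.insertNth (y i) fun k => y (i.succAbove k)) = fun j => y j := by
            exact Fin.insertNth_self_removeNth i (fun j => y j)
          rw [h6]
          rfl
      rcases hcases with h | h
      · exact Or.inl (hmem 1 h)
      · exact Or.inr (hmem (-1) h)
    · show ‖y‖⁻¹ • y = x
      rw [hyn, hy, smul_smul, inv_inv, mul_inv_cancel₀ hm0.ne', one_smul]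
  have hCsub : C ⊆ {x : E d | 1 ≤ ‖x‖} := Set.inter_subset_right
  have h2 : μH[(d:ℝ)] ((fun x : E d => ‖x‖⁻¹ • x) '' C)
      ≤ ((2:NNReal) : ENNReal) ^ (d:ℝ) * μH[(d:ℝ)] C :=
    ((normalize_lip d).mono hCsub).hausdorffMeasure_image_le (Nat.cast_nonneg d)
  have hconst : ∀ (c : NNReal), ((c : ENNReal)) ^ (d:ℝ) < ⊤ :=
    fun c => ENNReal.rpow_lt_top_of_nonneg (Nat.cast_nonneg d) ENNReal.coe_ne_top
  have hBfin : μH[(d:ℝ)] B < ⊤ := by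
    apply lt_of_le_of_lt (euc_hausdorff_le_volume d B Metric.isClosed_closedBall.measurableSet)
    exact ENNReal.mul_lt_top (hconst _) MeasureTheory.measure_closedBall_lt_top
  have hface : ∀ (i : Fin (d+1)) (ε : ℝ), μH[(d:ℝ)] (insE i ε '' B) < ⊤ := by
    intro i ε
    calc μH[(d:ℝ)] (insE i ε '' B) ≤ 1 ^ (d:ℝ) * μH[(d:ℝ)] B :=
        (insE_isometry i ε).lipschitz.hausdorffMeasure_image_le (Nat.cast_nonneg d) B
      _ = μH[(d:ℝ)] B := by simp
      _ < ⊤ := hBfin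
  have hCfin : μH[(d:ℝ)] C < ⊤ := by
    apply lt_of_le_of_lt (measure_mono (Set.inter_subset_left))
    apply lt_of_le_of_lt ((measure_iUnion_le _).trans_eq (tsum_fintype _))
    apply ENNReal.sum_lt_top.mpr
    intro i _
    exact lt_of_le_of_lt (measure_union_le _ _) (ENNReal.add_lt_top.mpr ⟨hface i 1, hface i (-1)⟩)
  calc μH[(d:ℝ)] (sph d) ≤ μH[(d:ℝ)] ((fun x : E d => ‖x‖⁻¹ • x) '' C) := measure_mono hcov
    _ ≤ ((2:NNReal) : ENNReal) ^ (d:ℝ) * μH[(d:ℝ)] C := h2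
    _ < ⊤ := ENNReal.mul_lt_top (hconst 2) hCfin

lemma slice_null (d : ℕ) (hd : 1 ≤ d) (z : E d) (hz : z ∈ sph d) (t : ℝ) :
    μH[(d:ℝ)] {y | y ∈ sph d ∧ ⟪z, y⟫ = t} = 0 := by
  have hz1 : ‖z‖ = 1 := by simpa [sph] using hz
  have hz0 : z ≠ 0 := by intro h; rw [h] at hz1; simp at hz1
  haveI : Fact (Module.finrank ℝ (E d) = d + 1) := ⟨finrank_euclideanSpace_fin⟩
  have hV : Module.finrank ℝ ((ℝ ∙ z)ᗮ) = d := Submodule.finrank_orthogonal_span_singleton hz0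
  let b : OrthonormalBasis (Fin d) ℝ ((ℝ ∙ z)ᗮ) :=
    (stdOrthonormalBasis ℝ ((ℝ ∙ z)ᗮ)).reindex (finCongr hV)
  let f : EuclideanSpace ℝ (Fin d) → E d := fun u => t • z + ((b.repr.symm u : (ℝ ∙ z)ᗮ) : E d)
  have hf : Isometry f := by
    intro u v
    simp only [f, edist_dist]
    congr 1
    rw [dist_eq_norm, dist_eq_norm]
    have : t • z + ((b.repr.symm u : (ℝ ∙ z)ᗮ) : E d) - (t • z + ((b.repr.symm v : (ℝ ∙ z)ᗮ) : E d))
        = ((b.repr.symm u - b.repr.symm v : (ℝ ∙ z)ᗮ) : E d) := by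
      push_cast; abel
    rw [this]
    rw [show ‖((b.repr.symm u - b.repr.symm v : (ℝ ∙ z)ᗮ) : E d)‖
        = ‖b.repr.symm u - b.repr.symm v‖ from rfl, ← map_sub, b.repr.symm.norm_map]
  have hsub : {y | y ∈ sph d ∧ ⟪z, y⟫ = t}
      ⊆ f '' (Metric.sphere 0 (Real.sqrt (1 - t^2))) := by
    rintro y ⟨hy, hyt⟩
    have hy1 : ‖y‖ = 1 := by simpa [sph] using hy
    set w : E d := y - t • z with hw
    have hwmem : w ∈ (ℝ ∙ z)ᗮ := by
      rw [Submodule.mem_orthogonal_singleton_iff_inner_right]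
      rw [hw, inner_sub_right, inner_smul_right, real_inner_self_eq_norm_sq, hz1, hyt]
      ring
    have hwn : ‖w‖ = Real.sqrt (1 - t^2) := by
      have h2 : ‖w‖^2 = 1 - t^2 := by
        rw [hw, norm_sub_sq_real, inner_smul_right, real_inner_comm, hyt, norm_smul, hy1, hz1,
          Real.norm_eq_abs]
        rw [mul_one, sq_abs]; ring
      rw [← h2, Real.sqrt_sq (norm_nonneg _)]
    refine ⟨b.repr ⟨w, hwmem⟩, by simp [b.repr.norm_map, hwn, Submodule.coe_norm], ?_⟩
    simp only [f, LinearIsometryEquiv.symm_apply_apply]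
    rw [hw]; abel
  have h1 : μH[(d:ℝ)] {y | y ∈ sph d ∧ ⟪z, y⟫ = t}
      ≤ μH[(d:ℝ)] (f '' (Metric.sphere 0 (Real.sqrt (1 - t^2)))) := measure_mono hsub
  have h2 := hf.lipschitz.hausdorffMeasure_image_le (d := (d:ℝ)) (Nat.cast_nonneg d)
    (Metric.sphere 0 (Real.sqrt (1 - t^2)))
  haveI : Nontrivial (EuclideanSpace ℝ (Fin d)) :=
    Module.nontrivial_of_finrank_pos (R := ℝ) (by simp [finrank_euclideanSpace_fin]; omega)
  have h3 : volume (Metric.sphere (0 : EuclideanSpace ℝ (Fin d)) (Real.sqrt (1 - t^2))) = 0 :=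
    Measure.addHaar_sphere volume 0 _
  have h4 := euc_hausdorff_le_volume d (Metric.sphere 0 (Real.sqrt (1 - t^2)))
    Metric.isClosed_sphere.measurableSet
  rw [h3, mul_zero] at h4
  exact le_antisymm (by calc μH[(d:ℝ)] {y | y ∈ sph d ∧ ⟪z, y⟫ = t} ≤ _ := h1
    _ ≤ 1 ^ (d:ℝ) * μH[(d:ℝ)] (Metric.sphere (0 : EuclideanSpace ℝ (Fin d)) (Real.sqrt (1 - t^2))) := by
        simpa using h2
    _ ≤ 0 := by simpa using h4) (zero_le)

/-- For a spherical `2n`-design on `S^d` and any `z ∈ S^d`, the set of dot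
products `D(z, ω_N)` contains at least `n+1` distinct elements. -/
theorem design_dot_products_lower_bound (d n N : ℕ) (hd : 1 ≤ d)
    (x : Fin N → E d) (hx : ∀ i, x i ∈ sph d) (hdes : IsDesign d (2*n) x) :
    ∀ z ∈ sph d, n + 1 ≤ (Set.range fun i => (inner ℝ z (x i) : ℝ)).ncard := by
  intro z hz
  by_contra hcon
  push_neg at hcon
  have hcard : (Set.range fun i => (inner ℝ z (x i) : ℝ)).ncard ≤ n := by omega
  have hTfin : (Set.range fun i => (inner ℝ z (x i) : ℝ)).Finite := Set.finite_range _
  set Tf : Finset ℝ := hTfin.toFinset with hTf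
  have hTfcard : Tf.card ≤ n := by
    rw [hTf, ← Set.ncard_eq_toFinset_card _ hTfin]
    exact hcard
  -- the linear polynomial y ↦ ⟪z, y⟫
  set L : MvPolynomial (Fin (d+1)) ℝ := ∑ j, MvPolynomial.C (z j) * MvPolynomial.X j with hL
  have hLeval : ∀ y : E d, MvPolynomial.eval (fun j => y j) L = ⟪z, y⟫ := by
    intro y
    rw [hL, map_sum, PiLp.inner_apply]
    apply Finset.sum_congr rfl
    intro j _
    simp [RCLike.inner_apply]; ring
  have hLdeg : L.totalDegree ≤ 1 := by
    apply MvPolynomial.totalDegree_finsetSum_le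
    intro j _
    calc (MvPolynomial.C (z j) * MvPolynomial.X j).totalDegree
        ≤ (MvPolynomial.C (z j)).totalDegree + (MvPolynomial.X j).totalDegree :=
          MvPolynomial.totalDegree_mul _ _
      _ ≤ 1 := by rw [MvPolynomial.totalDegree_C, MvPolynomial.totalDegree_X]
  set q : MvPolynomial (Fin (d+1)) ℝ := ∏ t ∈ Tf, (L - MvPolynomial.C t) with hq
  have hqdeg : q.totalDegree ≤ n := by
    calc q.totalDegree ≤ ∑ t ∈ Tf, (L - MvPolynomial.C t).totalDegree :=
        MvPolynomial.totalDegree_finset_prod _ _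
      _ ≤ ∑ _t ∈ Tf, 1 := by
          apply Finset.sum_le_sum
          intro t _
          exact le_trans (MvPolynomial.totalDegree_sub_C_le _ _) hLdeg
      _ = Tf.card := by simp
      _ ≤ n := hTfcard
  have hqeval : ∀ y : E d, MvPolynomial.eval (fun j => y j) q = ∏ t ∈ Tf, (⟪z, y⟫ - t) := by
    intro y
    rw [hq, map_prod]
    apply Finset.prod_congr rfl
    intro t _
    rw [map_sub, hLeval, MvPolynomial.eval_C]
  set p : MvPolynomial (Fin (d+1)) ℝ := q * q with hp
  have hpdeg : p.totalDegree ≤ 2 * n := by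
    calc p.totalDegree ≤ q.totalDegree + q.totalDegree := MvPolynomial.totalDegree_mul _ _
      _ ≤ 2 * n := by omega
  have hpeval : ∀ y : E d, MvPolynomial.eval (fun j => y j) p
      = (∏ t ∈ Tf, (⟪z, y⟫ - t))^2 := by
    intro y
    rw [hp, map_mul, hqeval, sq]
  -- the design sum vanishes
  have hsum : ∑ i, MvPolynomial.eval (fun j => x i j) p = 0 := by
    apply Finset.sum_eq_zero
    intro i _
    rw [hpeval]
    have hmem : (⟪z, x i⟫ : ℝ) ∈ Tf := by
      rw [hTf, Set.Finite.mem_toFinset]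
      exact ⟨i, rfl⟩
    rw [Finset.prod_eq_zero hmem (sub_self _)]
    norm_num
  have hint : ∫ y, MvPolynomial.eval (fun j => y j) p ∂(sigmad d) = 0 := by
    rw [← hdes p hpdeg, hsum, mul_zero]
  -- define g and show integral zero implies a.e. zero
  set g : E d → ℝ := fun y => (∏ t ∈ Tf, (⟪z, y⟫ - t))^2 with hg
  have hgeq : (fun y : E d => MvPolynomial.eval (fun j => y j) p) = g := funext hpeval
  have hgcont : Continuous g := by
    apply Continuous.pow
    apply continuous_finset_prod
    intro t _
    exact (continuous_const.inner continuous_id).sub continuous_const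
  have hgnonneg : ∀ y, 0 ≤ g y := fun y => sq_nonneg _
  -- integrability
  have hGint : Integrable g (sigmad d) := by
    rw [sigmad]
    obtain ⟨M, hM⟩ := (isCompact_sphere (0 : E d) 1).exists_bound_of_continuousOn
      hgcont.continuousOn
    have h1 : IntegrableOn g (sph d) μH[(d:ℝ)] := by
      apply Measure.integrableOn_of_bounded (sph_haus_fin d).ne hgcont.aestronglyMeasurable
      exact ae_restrict_of_forall_mem Metric.isClosed_sphere.measurableSet hM
    exact h1.smul_measure (ENNReal.inv_ne_top.mpr (sph_haus_pos d hd).ne')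
  have hae : ∀ᵐ y ∂(sigmad d), g y = 0 := by
    have h0 : ∫ y, g y ∂(sigmad d) = 0 := by rw [← hgeq] at *; exact hint
    have := (integral_eq_zero_iff_of_nonneg hgnonneg hGint).mp h0
    filter_upwards [this] with y hy using hy
  have hnull : sigmad d {y | g y ≠ 0} = 0 := ae_iff.mp hae
  -- total mass
  have htot : sigmad d (sph d) = 1 := by
    rw [sigmad, Measure.smul_apply, Measure.restrict_apply_self, smul_eq_mul]
    exact ENNReal.inv_mul_cancel (sph_haus_pos d hd).ne' (sph_haus_fin d).ne
  -- slices are null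
  have hslice : ∀ t : ℝ, sigmad d {y | y ∈ sph d ∧ ⟪z, y⟫ = t} = 0 := by
    intro t
    have h1 : sigmad d {y | y ∈ sph d ∧ ⟪z, y⟫ = t}
        ≤ (μH[(d:ℝ)] (sph d))⁻¹ * μH[(d:ℝ)] {y | y ∈ sph d ∧ ⟪z, y⟫ = t} := by
      rw [sigmad, Measure.smul_apply, smul_eq_mul]
      exact mul_le_mul_right (Measure.restrict_le_self _) _
    rw [slice_null d hd z hz t, mul_zero] at h1
    exact le_antisymm h1 (zero_le)
  -- covering
  have hcover : sph d ⊆ {y | g y ≠ 0} ∪ ⋃ t ∈ Tf, {y | y ∈ sph d ∧ ⟪z, y⟫ = t} := by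
    intro y hy
    by_cases h : g y = 0
    · right
      rw [hg] at h
      have h2 : ∏ t ∈ Tf, (⟪z, y⟫ - t) = 0 := by
        exact pow_eq_zero_iff (by norm_num) |>.mp h
      obtain ⟨t, htm, ht0⟩ := Finset.prod_eq_zero_iff.mp h2
      exact Set.mem_biUnion htm ⟨hy, by linarith [sub_eq_zero.mp ht0]⟩
    · exact Or.inl h
  have : (1:ENNReal) ≤ 0 := by
    calc (1:ENNReal) = sigmad d (sph d) := htot.symm
      _ ≤ sigmad d ({y | g y ≠ 0} ∪ ⋃ t ∈ Tf, {y | y ∈ sph d ∧ ⟪z, y⟫ = t}) :=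
          measure_mono hcover
      _ ≤ sigmad d {y | g y ≠ 0} + sigmad d (⋃ t ∈ Tf, {y | y ∈ sph d ∧ ⟪z, y⟫ = t}) :=
          measure_union_le _ _
      _ ≤ 0 + ∑ t ∈ Tf, sigmad d {y | y ∈ sph d ∧ ⟪z, y⟫ = t} := by
          rw [hnull]
          exact add_le_add le_rfl (measure_biUnion_finset_le _ _)
      _ = 0 := by
          rw [zero_add]
          apply Finset.sum_eq_zero
          intro t _
          exact hslice t
  simp at this
end
end

section
/- Let d, m ≥ 1 and let ω_N be a strongly m-sharp configuration on S^d (i.e., an m-distance set that is a spherical 2m-design). Then no dot product between two distinct vectors in ω_N equals -1; that is, ω_N contains no antipodal pair of points. -/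
open scoped RealInnerProductSpace
open MeasureTheory Set

noncomputable section

/- ### Auxiliary lemmas -/

/-- If a relatively open subset of the sphere is `μH^d`-null, so is the whole
sphere (by homogeneity: finitely many isometric copies cover the sphere). -/
lemma sph_cover_null (d : ℕ) (W : Set (E d)) (hW : IsOpen W)
    (hne : (sph d ∩ W).Nonempty) (h0 : μH[(d:ℝ)] (sph d ∩ W) = 0) :
    μH[(d:ℝ)] (sph d) = 0 := by
  obtain ⟨y₀, hy₀s, hy₀W⟩ := hne
  have hy₀n : ‖y₀‖ = 1 := by rwa [sph, mem_sphere_zero_iff_norm] at hy₀s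
  set g : E d → (E d ≃ₗᵢ[ℝ] E d) := fun z =>
    Submodule.reflection (ℝ ∙ (y₀ - z))ᗮ with hg
  have hmap : ∀ z ∈ sph d, g z y₀ = z := by
    intro z hz
    have hzn : ‖z‖ = 1 := by rwa [sph, mem_sphere_zero_iff_norm] at hz
    exact Submodule.reflection_sub (by rw [hy₀n, hzn])
  have hsph_img : ∀ z : E d, (g z) '' (sph d) = sph d := by
    intro z
    have := (g z).toIsometryEquiv.image_sphere 0 1
    simpa [sph] using this
  have hcov : sph d ⊆ ⋃ z ∈ sph d, (g z) '' W := by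
    intro z hz
    exact mem_iUnion₂.2 ⟨z, hz, ⟨y₀, hy₀W, hmap z hz⟩⟩
  have hcpt : IsCompact (sph d) := isCompact_sphere 0 1
  obtain ⟨b, hbsub, hbfin, hbcov⟩ := hcpt.elim_finite_subcover_image
    (fun z _ => (g z).toHomeomorph.isOpenMap _ hW) hcov
  have hsub2 : sph d ⊆ ⋃ z ∈ b, (g z) '' (sph d ∩ W) := by
    intro y hy
    obtain ⟨z, hz, w, hw, hwy⟩ := by
      simpa using hbcov hy
    refine mem_iUnion₂.2 ⟨z, hz, w, ⟨?_, hw⟩, hwy⟩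
    have hw' : w = (g z).symm y := by simp [← hwy]
    rw [hw']
    have himg : (g z).symm '' (sph d) = sph d := by
      have := ((g z).symm).toIsometryEquiv.image_sphere 0 1
      simpa [sph] using this
    rw [← himg]
    exact ⟨y, hy, rfl⟩
  have hnull : μH[(d:ℝ)] (⋃ z ∈ b, (g z) '' (sph d ∩ W)) = 0 := by
    refine (measure_biUnion_null_iff hbfin.countable).2 ?_
    intro z _
    rw [(g z).isometry.hausdorffMeasure_image (Or.inl (Nat.cast_nonneg d))]
    exact h0
  exact le_antisymm (hnull ▸ measure_mono hsub2) zero_le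

/-- For `d ≥ 1` there is a point of the sphere whose dot product with a given
unit vector lies in `(-1,1)` and avoids a given finite set. -/
lemma exists_good_point (d : ℕ) (hd : 1 ≤ d) (e : E d) (he : ‖e‖ = 1)
    (B : Set ℝ) (hB : B.Finite) :
    ∃ y ∈ sph d, ⟪e, y⟫ ∈ Ioo (-1:ℝ) 1 ∧ ⟪e, y⟫ ∉ B := by
  have hIoo : (Ioo (-1:ℝ) 1).Infinite := Set.Ioo_infinite (by norm_num)
  obtain ⟨t, ht⟩ := (hIoo.diff hB).nonempty
  obtain ⟨htI, htB⟩ := ht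
  have hesp : e ≠ 0 := by intro h; rw [h] at he; simp at he
  have hKne : (ℝ ∙ e)ᗮ ≠ ⊥ := by
    intro h
    have htop : (ℝ ∙ e) = ⊤ := by
      rw [← Submodule.orthogonal_eq_bot_iff]; exact h
    have h1 : Module.finrank ℝ (ℝ ∙ e) = 1 := finrank_span_singleton hesp
    rw [htop] at h1
    have hde : Module.finrank ℝ (E d) = d + 1 := by simp [finrank_euclideanSpace]
    rw [finrank_top] at h1
    omega
  obtain ⟨v, hvK, hvne⟩ := Submodule.ne_bot_iff _ |>.1 hKne
  have hov : ⟪e, v⟫ = 0 := hvK e (Submodule.mem_span_singleton_self e)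
  set v' : E d := ‖v‖⁻¹ • v with hv'
  have hv'n : ‖v'‖ = 1 := by
    rw [hv', norm_smul]
    simp [norm_ne_zero_iff.2 hvne, inv_mul_cancel₀]
  have hov' : ⟪e, v'⟫ = 0 := by rw [hv', real_inner_smul_right, hov, mul_zero]
  set s : ℝ := Real.sqrt (1 - t^2) with hs
  have ht2 : t^2 ≤ 1 := by nlinarith [htI.1, htI.2]
  set y : E d := t • e + s • v' with hy
  have hinner : ⟪e, y⟫ = t := by
    rw [hy, inner_add_right, real_inner_smul_right, real_inner_smul_right,
      real_inner_self_eq_norm_sq, he, hov']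
    ring
  have hyn : ‖y‖ = 1 := by
    have horth : ⟪t • e, s • v'⟫ = 0 := by
      rw [real_inner_smul_right, real_inner_smul_left, hov']; ring
    have hexp := norm_add_sq_real (t • e) (s • v')
    rw [horth] at hexp
    have hny2 : ‖y‖^2 = 1 := by
      rw [hy, hexp, norm_smul, norm_smul, he, hv'n]
      simp [mul_pow]
      nlinarith [Real.sq_sqrt (show (0:ℝ) ≤ 1 - t^2 by linarith), Real.sqrt_nonneg (1 - t^2)]
    nlinarith [norm_nonneg y]
  exact ⟨y, by rwa [sph, mem_sphere_zero_iff_norm], by rw [hinner]; exact htI,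
    by rw [hinner]; exact htB⟩

open MvPolynomial in
/-- The linear form `y ↦ ⟨e, y⟩` as a multivariate polynomial. -/
def linL (d : ℕ) (e : E d) : MvPolynomial (Fin (d+1)) ℝ := ∑ j, C (e j) * X j

open MvPolynomial in
/-- The polynomial `y ↦ (1 - ⟨e,y⟩²) ∏_{c ∈ Tf} (⟨e,y⟩ - c)²`. -/
def polP (d : ℕ) (e : E d) (Tf : Finset ℝ) : MvPolynomial (Fin (d+1)) ℝ :=
  (1 - (linL d e)^2) * ∏ c ∈ Tf, (linL d e - C c)^2

open MvPolynomial in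
lemma linL_eval (d : ℕ) (e : E d) (y : E d) :
    eval (fun j => y j) (linL d e) = ⟪e, y⟫ := by
  simp [linL, PiLp.inner_apply, RCLike.inner_apply, conj_trivial]
  exact Finset.sum_congr rfl fun _ _ => mul_comm _ _

open MvPolynomial in
lemma polP_eval (d : ℕ) (e : E d) (Tf : Finset ℝ) (y : E d) :
    eval (fun j => y j) (polP d e Tf) =
      (1 - ⟪e, y⟫^2) * ∏ c ∈ Tf, (⟪e, y⟫ - c)^2 := by
  simp [polP, linL_eval]

open MvPolynomial in
lemma linL_deg (d : ℕ) (e : E d) : (linL d e).totalDegree ≤ 1 := by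
  refine (totalDegree_finset_sum _ _).trans ?_
  refine Finset.sup_le fun j _ => ?_
  refine (totalDegree_mul _ _).trans ?_
  simp [totalDegree_X]

open MvPolynomial in
lemma polP_deg (d : ℕ) (e : E d) (Tf : Finset ℝ) :
    (polP d e Tf).totalDegree ≤ 2 + 2 * Tf.card := by
  refine (totalDegree_mul _ _).trans (add_le_add ?_ ?_)
  · refine (totalDegree_sub _ _).trans ?_
    refine max_le (by simp) ?_
    refine (totalDegree_pow _ _).trans ?_
    have := linL_deg d e
    omega
  · refine (totalDegree_finset_prod _ _).trans ?_
    calc _ ≤ ∑ _c ∈ Tf, 2 := Finset.sum_le_sum fun c _ => ?_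
      _ = 2 * Tf.card := by rw [Finset.sum_const, smul_eq_mul, mul_comm]
    refine (totalDegree_pow _ _).trans ?_
    have h1 : (linL d e - C c).totalDegree ≤ 1 :=
      (totalDegree_sub_C_le _ _).trans (linL_deg d e)
    omega

/-- A strongly `m`-sharp configuration on `S^d` contains no antipodal pair:
no dot product between distinct points equals `-1`. -/
theorem strongly_sharp_no_antipodal_pair (d m N : ℕ) (hd : 1 ≤ d) (hm : 1 ≤ m)
    (x : Fin N → E d) (hsharp : IsStronglySharp d m x) :
    ∀ i j, i ≠ j → (inner ℝ (x i) (x j) : ℝ) ≠ -1 := by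
  intro i j hij hinner
  obtain ⟨⟨hsphm, hinj, hdes1, hcard⟩, hdes2⟩ := hsharp
  have hN : (N:ℝ) ≠ 0 := by
    have : N ≠ 0 := by rintro rfl; exact Fin.elim0 i
    exact_mod_cast this
  -- the normalized measure is a probability measure
  have hprob := hdes2 1 (by simp)
  simp only [map_one, Finset.sum_const, Finset.card_univ, Fintype.card_fin,
    nsmul_eq_mul, mul_one, integral_const, smul_eq_mul] at hprob
  rw [inv_mul_cancel₀ hN] at hprob
  have hσu : (sigmad d) Set.univ = (μH[(d:ℝ)] (sph d))⁻¹ * μH[(d:ℝ)] (sph d) := by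
    simp [sigmad, Measure.smul_apply, smul_eq_mul]
  have ha0 : μH[(d:ℝ)] (sph d) ≠ 0 := by
    intro h
    rw [h] at hσu; simp at hσu
    rw [hσu] at hprob; simp at hprob
  have hat : μH[(d:ℝ)] (sph d) ≠ ⊤ := by
    intro h
    rw [h] at hσu; simp at hσu
    rw [hσu] at hprob; simp at hprob
  have huniv : (sigmad d) Set.univ = 1 := by
    rw [hσu, ENNReal.inv_mul_cancel ha0 hat]
  haveI : IsFiniteMeasure (sigmad d) := ⟨by rw [huniv]; exact ENNReal.one_lt_top⟩
  -- the dot product set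
  have hmem : (-1:ℝ) ∈ dotSet x := ⟨i, j, hij, hinner⟩
  have hfin : (dotSet x).Finite := by
    by_contra h
    have : (dotSet x).ncard = 0 := Set.Infinite.ncard h
    omega
  set Tf : Finset ℝ := hfin.toFinset.erase (-1) with hTf
  have hTcard : Tf.card = m - 1 := by
    rw [hTf, Finset.card_erase_of_mem (hfin.mem_toFinset.2 hmem),
      ← Set.ncard_eq_toFinset_card _ hfin, hcard]
  set e : E d := x i with he'
  have he : ‖e‖ = 1 := by
    have := hsphm i
    rwa [sph, mem_sphere_zero_iff_norm] at this
  set f : E d → ℝ := fun y => (1 - ⟪e, y⟫^2) * ∏ c ∈ Tf, (⟪e, y⟫ - c)^2 with hf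
  -- the design identity at degree 2m forces ∫ f = 0
  have hdeg : (polP d e Tf).totalDegree ≤ 2*m := by
    refine (polP_deg d e Tf).trans ?_
    rw [hTcard]; omega
  have hPdes := hdes2 (polP d e Tf) hdeg
  have hsum : ∑ l, MvPolynomial.eval (fun k => x l k) (polP d e Tf) = 0 := by
    refine Finset.sum_eq_zero fun l _ => ?_
    rw [polP_eval]
    by_cases hl : l = i
    · subst hl
      have : ⟪e, x l⟫ = 1 := by
        rw [← he']; rw [real_inner_self_eq_norm_sq, he]; ring
      rw [this]; ring
    · have hds : ⟪e, x l⟫ ∈ dotSet x := ⟨i, l, fun h => hl h.symm, rfl⟩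
      by_cases hm1 : ⟪e, x l⟫ = -1
      · rw [hm1]; ring
      · have hmemT : ⟪e, x l⟫ ∈ Tf :=
          Finset.mem_erase.2 ⟨hm1, hfin.mem_toFinset.2 hds⟩
        rw [Finset.prod_eq_zero hmemT (by ring), mul_zero]
  have hint : ∫ y, f y ∂(sigmad d) = 0 := by
    have : ∫ y, f y ∂(sigmad d)
        = ∫ y, MvPolynomial.eval (fun k => y k) (polP d e Tf) ∂(sigmad d) := by
      exact integral_congr_ae (Filter.Eventually.of_forall fun y =>
        (polP_eval d e Tf y).symm)
    rw [this, ← hPdes, hsum, mul_zero]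
  -- f is nonnegative a.e. and continuous, hence a.e. zero
  have hsphmeas : MeasurableSet (sph d) := Metric.isClosed_sphere.measurableSet
  have haesph : ∀ᵐ y ∂(sigmad d), y ∈ sph d := by
    rw [sigmad]
    exact Measure.ae_smul_measure (ae_restrict_mem hsphmeas) _
  have hnn : 0 ≤ᵐ[sigmad d] f := by
    filter_upwards [haesph] with y hy
    have hyn : ‖y‖ = 1 := by rwa [sph, mem_sphere_zero_iff_norm] at hy
    have habs : |⟪e, y⟫| ≤ 1 := by
      have := abs_real_inner_le_norm e y
      rwa [he, hyn, one_mul] at this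
    have h1 : ⟪e, y⟫^2 ≤ 1 := by nlinarith [abs_nonneg ⟪e, y⟫, le_abs_self ⟪e,y⟫, neg_abs_le ⟪e,y⟫]
    exact mul_nonneg (by linarith) (Finset.prod_nonneg fun c _ => sq_nonneg _)
  have hfc : Continuous f := by
    have hic : Continuous fun y : E d => ⟪e, y⟫ := continuous_const.inner continuous_id
    fun_prop
  obtain ⟨Cb, hCb⟩ := (isCompact_sphere (0:E d) 1).exists_bound_of_continuousOn
    hfc.continuousOn
  have hbd : ∀ᵐ y ∂(sigmad d), ‖f y‖ ≤ Cb := by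
    filter_upwards [haesph] with y hy
    exact hCb y hy
  have hintg : Integrable f (sigmad d) :=
    ⟨hfc.aestronglyMeasurable, HasFiniteIntegral.of_bounded hbd⟩
  have hzero : f =ᵐ[sigmad d] 0 :=
    (integral_eq_zero_iff_of_nonneg_ae hnn hintg).1 hint
  -- so the open set where f ≠ 0 is null on the sphere
  set W : Set (E d) := {y | f y ≠ 0} with hW
  have hWopen : IsOpen W := isOpen_ne_fun hfc continuous_const
  have hWmeas : MeasurableSet W := hWopen.measurableSet
  have hσW : (sigmad d) W = 0 := by
    have := hzero
    rw [Filter.EventuallyEq, ae_iff] at this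
    simpa [hW] using this
  have hμW : μH[(d:ℝ)] (sph d ∩ W) = 0 := by
    rw [sigmad, Measure.smul_apply, Measure.restrict_apply hWmeas, smul_eq_mul] at hσW
    rcases mul_eq_zero.1 hσW with h | h
    · exact absurd h (ENNReal.inv_ne_zero.2 hat)
    · rw [Set.inter_comm]; exact h
  -- but the sphere meets W
  have hne : (sph d ∩ W).Nonempty := by
    obtain ⟨y, hysph, hyI, hyB⟩ := exists_good_point d hd e he (↑Tf) (Tf.finite_toSet)
    refine ⟨y, hysph, ?_⟩
    rw [hW]
    simp only [Set.mem_setOf_eq, hf]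
    refine mul_ne_zero ?_ ?_
    · have : ⟪e, y⟫^2 < 1 := by
        obtain ⟨h1, h2⟩ := hyI
        nlinarith
      intro h; nlinarith
    · rw [Finset.prod_ne_zero_iff]
      intro c hc
      have : ⟪e, y⟫ ≠ c := fun h => hyB (h ▸ hc)
      intro h
      exact this (by nlinarith [sq_nonneg (⟪e,y⟫ - c)])
  exact ha0 (sph_cover_null d W hWopen hne hμW)
end
end

section
/- Let d, m ≥ 1, let g : [-1,1] → [-∞,∞), let A = {t_1,...,t_{m+1}} with -1 ≤ t_1 < ... < t_{m+1} ≤ 1, and let q be a polynomial with q(t_i) = g(t_i) for all i and q(t) ≥ g(t) on [-1,1]. If ω_N = {x_1,...,x_N} ⊂ S^d is a spherical L-design with L ≥ deg q, and y ∈ S^d satisfies D(y, ω_N) ⊆ A, then the potential p^g(x, ω_N) = Σ_{i=1}^N g(x·x_i) attains its absolute maximum over S^d at the point y. -/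
open scoped RealInnerProductSpace
open MeasureTheory Set

noncomputable section

section MaxPrincipleAux

/-- Coercion of a real finite sum into `EReal`. -/
lemma ereal_coe_finset_sum {ι : Type*} (s : Finset ι) (f : ι → ℝ) :
    ((∑ i ∈ s, f i : ℝ) : EReal) = ∑ i ∈ s, (f i : EReal) := by
  induction s using Finset.cons_induction with
  | empty => simp
  | cons a s ha ih => rw [Finset.sum_cons, Finset.sum_cons, EReal.coe_add, ih]

/-- Evaluation of the multivariate polynomial `q(⟨z, ·⟩)`. -/
lemma eval_compPoly {d : ℕ} (q : Polynomial ℝ) (z v : Fin (d+1) → ℝ) :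
    MvPolynomial.eval v (q.eval₂ MvPolynomial.C (∑ j, MvPolynomial.C (z j) * MvPolynomial.X j))
      = q.eval (∑ j, z j * v j) := by
  rw [Polynomial.hom_eval₂]
  have h1 : (MvPolynomial.eval v).comp (MvPolynomial.C (σ := Fin (d+1))) = RingHom.id ℝ := by
    ext r; simp
  have h2 : MvPolynomial.eval v (∑ j, MvPolynomial.C (z j) * MvPolynomial.X j)
      = ∑ j, z j * v j := by simp
  rw [h1, h2]; rfl

/-- Total degree bound for the multivariate polynomial `q(⟨z, ·⟩)`. -/
lemma totalDegree_compPoly {d : ℕ} (q : Polynomial ℝ) (z : Fin (d+1) → ℝ) :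
    (q.eval₂ MvPolynomial.C
      (∑ j, MvPolynomial.C (z j) * MvPolynomial.X j)).totalDegree ≤ q.natDegree := by
  rw [Polynomial.eval₂_eq_sum, Polynomial.sum_def]
  refine le_trans (MvPolynomial.totalDegree_finset_sum _ _) ?_
  apply Finset.sup_le
  intro k hk
  calc (MvPolynomial.C (q.coeff k)
        * (∑ j, MvPolynomial.C (z j) * MvPolynomial.X j) ^ k).totalDegree
      ≤ _ + _ := MvPolynomial.totalDegree_mul _ _
    _ ≤ 0 + k * 1 := by
        gcongr
        · simp
        · refine le_trans (MvPolynomial.totalDegree_pow _ _) ?_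
          gcongr
          refine le_trans (MvPolynomial.totalDegree_finset_sum _ _) ?_
          apply Finset.sup_le
          intro j _
          refine le_trans (MvPolynomial.totalDegree_mul _ _) ?_
          simp [MvPolynomial.totalDegree_X]
    _ = k := by ring
    _ ≤ q.natDegree := Polynomial.le_natDegree_of_mem_supp _ hk

/-- Rotational invariance of the integral of `q(⟨z, ·⟩)` against `σ_d`. -/
lemma integral_inner_poly_invariant (d : ℕ) (q : Polynomial ℝ) {y z : E d}
    (hy : y ∈ sph d) (hz : z ∈ sph d) :
    ∫ u, q.eval (inner ℝ z u : ℝ) ∂(sigmad d) = ∫ u, q.eval (inner ℝ y u : ℝ) ∂(sigmad d) := by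
  have hny : ‖y‖ = 1 := mem_sphere_zero_iff_norm.mp hy
  have hnz : ‖z‖ = 1 := mem_sphere_zero_iff_norm.mp hz
  set T : E d ≃ₗᵢ[ℝ] E d := Submodule.reflection (ℝ ∙ (y - z))ᗮ with hTdef
  have hTy : T y = z := Submodule.reflection_sub (by rw [hny, hnz])
  have hTsymm : T.symm z = y := by rw [← hTy]; exact T.symm_apply_apply y
  have hpre : (T : E d → E d) ⁻¹' (sph d) = sph d := by
    ext u
    simp [sph, mem_sphere_zero_iff_norm, T.norm_map]
  have hmap : Measure.map T (sigmad d) = sigmad d := by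
    rw [sigmad, Measure.map_smul]
    congr 1
    have hmapH : Measure.map (⇑T) (μH[(d:ℝ)] : Measure (E d)) = μH[(d:ℝ)] :=
      T.toIsometryEquiv.map_hausdorffMeasure _
    have h2 : (Measure.map (⇑T) (μH[(d:ℝ)] : Measure (E d))).restrict (sph d)
        = Measure.map (⇑T) (μH[(d:ℝ)].restrict (sph d)) := by
      rw [Measure.restrict_map T.continuous.measurable
        (by exact (Metric.isClosed_sphere).measurableSet : MeasurableSet (sph d)), hpre]
    rw [← h2, hmapH]
  have hcont : Continuous fun u : E d => q.eval (inner ℝ z u : ℝ) :=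
    q.continuous_aeval.comp (continuous_const.inner continuous_id)
  calc ∫ u, q.eval (inner ℝ z u : ℝ) ∂(sigmad d)
      = ∫ u, q.eval (inner ℝ z u : ℝ) ∂(Measure.map T (sigmad d)) := by rw [hmap]
    _ = ∫ u, q.eval (inner ℝ z (T u) : ℝ) ∂(sigmad d) := by
        rw [integral_map T.continuous.measurable.aemeasurable
          (by rw [hmap]; exact hcont.aestronglyMeasurable)]
    _ = ∫ u, q.eval (inner ℝ y u : ℝ) ∂(sigmad d) := by
        congr 1; ext u
        rw [← hTsymm, ← T.inner_map_map (T.symm z) u, T.apply_symm_apply]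

end MaxPrincipleAux

/-- Maximum principle: if a polynomial `q` of degree at most `L` dominates `g`
on `[-1,1]` and interpolates it at the nodes `t 0 < … < t m` forming the set
`A`, `ω_N` is a spherical `L`-design, and `y ∈ S^d` satisfies
`D(y, ω_N) ⊆ A`, then the potential `p^g(·, ω_N)` attains its absolute
maximum over `S^d` at `y`. -/
theorem max_principle (d m N L : ℕ) (hd : 1 ≤ d) (hm : 1 ≤ m)
    (g : ℝ → EReal)
    (t : Fin (m+1) → ℝ) (hmono : StrictMono t) (htmem : ∀ i, t i ∈ Icc (-1:ℝ) 1)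
    (q : Polynomial ℝ) (hdeg : q.natDegree ≤ L)
    (hval : ∀ i, ((q.eval (t i) : ℝ) : EReal) = g (t i))
    (hge : ∀ s ∈ Icc (-1:ℝ) 1, g s ≤ ((q.eval s : ℝ) : EReal))
    (x : Fin N → E d) (hx : ∀ i, x i ∈ sph d) (hdes : IsDesign d L x)
    (y : E d) (hy : y ∈ sph d) (hD : ∀ i, ∃ j, (inner ℝ y (x i) : ℝ) = t j) :
    ∀ z ∈ sph d, ∑ i, g (inner ℝ z (x i) : ℝ) ≤ ∑ i, g (inner ℝ y (x i) : ℝ) := by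
  intro z hz
  have hinner : ∀ (w v : E d), (inner ℝ w v : ℝ) = ∑ j, w j * v j := by
    intro w v
    simp [PiLp.inner_apply, RCLike.inner_apply, mul_comm]
  have hIcc : ∀ (w : E d), w ∈ sph d → ∀ i, (inner ℝ w (x i) : ℝ) ∈ Icc (-1:ℝ) 1 := by
    intro w hw i
    have h := abs_real_inner_le_norm w (x i)
    rw [mem_sphere_zero_iff_norm.mp hw, mem_sphere_zero_iff_norm.mp (hx i), one_mul] at h
    exact Set.mem_Icc.mpr (abs_le.mp h)
  have hkey : ∀ w : E d, (N:ℝ)⁻¹ * ∑ i, q.eval (inner ℝ w (x i) : ℝ)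
      = ∫ u, q.eval (inner ℝ w u : ℝ) ∂(sigmad d) := by
    intro w
    have hdegw : (q.eval₂ MvPolynomial.C
        (∑ j, MvPolynomial.C (w j) * MvPolynomial.X j)).totalDegree ≤ L :=
      le_trans (totalDegree_compPoly q (fun j => w j)) hdeg
    have h := hdes _ hdegw
    rw [Fintype.card_fin] at h
    calc (N:ℝ)⁻¹ * ∑ i, q.eval (inner ℝ w (x i) : ℝ)
        = (N:ℝ)⁻¹ * ∑ i, MvPolynomial.eval (fun j => x i j)
            (q.eval₂ MvPolynomial.C (∑ j, MvPolynomial.C (w j) * MvPolynomial.X j)) := by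
          congr 1
          refine Finset.sum_congr rfl fun i _ => ?_
          rw [eval_compPoly, hinner]
      _ = ∫ u, MvPolynomial.eval (fun j => u j)
            (q.eval₂ MvPolynomial.C (∑ j, MvPolynomial.C (w j) * MvPolynomial.X j))
            ∂(sigmad d) := h
      _ = ∫ u, q.eval (inner ℝ w u : ℝ) ∂(sigmad d) := by
          congr 1; ext u
          rw [eval_compPoly, hinner]
  have hsumeq : ∑ i, q.eval (inner ℝ z (x i) : ℝ) = ∑ i, q.eval (inner ℝ y (x i) : ℝ) := by
    rcases Nat.eq_zero_or_pos N with h0 | hN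
    · subst h0; simp
    · have hNne : ((N:ℝ))⁻¹ ≠ 0 := inv_ne_zero (Nat.cast_ne_zero.mpr hN.ne')
      have heq : (N:ℝ)⁻¹ * ∑ i, q.eval (inner ℝ z (x i) : ℝ)
          = (N:ℝ)⁻¹ * ∑ i, q.eval (inner ℝ y (x i) : ℝ) := by
        rw [hkey z, hkey y]
        exact integral_inner_poly_invariant d q hy hz
      exact mul_left_cancel₀ hNne heq
  calc ∑ i, g (inner ℝ z (x i) : ℝ)
      ≤ ∑ i, ((q.eval (inner ℝ z (x i) : ℝ) : ℝ) : EReal) :=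
        Finset.sum_le_sum fun i _ => hge _ (hIcc z hz i)
    _ = ((∑ i, q.eval (inner ℝ z (x i) : ℝ) : ℝ) : EReal) :=
        (ereal_coe_finset_sum _ _).symm
    _ = ((∑ i, q.eval (inner ℝ y (x i) : ℝ) : ℝ) : EReal) := by rw [hsumeq]
    _ = ∑ i, ((q.eval (inner ℝ y (x i) : ℝ) : ℝ) : EReal) := ereal_coe_finset_sum _ _
    _ = ∑ i, g (inner ℝ y (x i) : ℝ) := by
        refine Finset.sum_congr rfl fun i _ => ?_
        obtain ⟨j, hj⟩ := hD i
        rw [hj, hval j]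
end
end
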